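/- Under the setup of the renormalized energy on a genus-zero closed surface: for any admissible configuration (a,d) ∈ 𝒜ⁿ and any index j, the gradient of the renormalized energy with respect to a_j satisfies ∇_{a_j} W(a,d) = 2π d_j (∇S_j(a_j) + 2π d_j ∇H(a_j, a_j)), where S_j := ⋆Ψ(a,d) − 2π d_j G(·, a_j) = 2π Σ_{k≠j} d_k G(·, a_k) + ψ₀ is the regular part of ⋆Ψ near a_j. -/

import Mathlib

open Set
open scoped Real

private lemma aux_split {n : ℕ} (j : Fin n) (g : Fin n → ℝ) :
    ∑ k ∈ Finset.univ.filter (fun k => k ≠ j), g k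
      = ∑ k ∈ Finset.univ.filter (fun k => j < k), g k
        + ∑ k ∈ Finset.univ.filter (fun k => k < j), g k := by
  rw [Finset.sum_filter, Finset.sum_filter, Finset.sum_filter, ← Finset.sum_add_distrib]
  refine Finset.sum_congr rfl fun k _ => ?_
  rcases lt_trichotomy j k with h | h | h
  · simp [h, h.ne', (asymm h : ¬ k < j)]
  · subst h; simp
  · simp [h, h.ne, (asymm h : ¬ j < k)]

/-- For the renormalized energy on a genus-zero closed surface `M`
(embedded in `ℝ^ℓ`), given by
`W(a,d) = 4π² Σ_{j<k} d_j d_k G(a_j,a_k) + 2π Σ_j (π d_j² H(a_j,a_j) + d_j ψ₀(a_j)) + c`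
(`G` the Green function with symmetric regular part `H`, `ψ₀` the geometric
potential, `c = (1/2)∫|dψ₀|²`), the gradient with respect to `a_j` satisfies
`∇_{a_j} W(a,d) = 2π d_j (∇S_j(a_j) + 2π d_j ∇H(a_j,a_j))`, where
`S_j = 2π Σ_{k≠j} d_k G(·,a_k) + ψ₀` is the regular part of `⋆Ψ(a,d)` near `a_j`.
The (tangential) gradients are expressed as derivatives within `M`. -/
theorem stmt_9 (ℓ n : ℕ)
    (M : Set (EuclideanSpace ℝ (Fin ℓ)))
    (G : EuclideanSpace ℝ (Fin ℓ) → EuclideanSpace ℝ (Fin ℓ) → ℝ)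
    (H : EuclideanSpace ℝ (Fin ℓ) × EuclideanSpace ℝ (Fin ℓ) → ℝ)
    (ψ₀ : EuclideanSpace ℝ (Fin ℓ) → ℝ) (c : ℝ)
    (hGsym : ∀ x ∈ M, ∀ y ∈ M, G x y = G y x)
    (hHsym : ∀ x ∈ M, ∀ y ∈ M, H (x, y) = H (y, x))
    (hHreg : ContDiffOn ℝ 1 H (M ×ˢ M))
    (hψ : ContDiffOn ℝ 1 ψ₀ M)
    (hGreg : ∀ y ∈ M, ContDiffOn ℝ 1 (fun x => G x y) (M \ {y}))
    -- the admissible configuration (a, d)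
    (d : Fin n → ℤ) (a : Fin n → EuclideanSpace ℝ (Fin ℓ))
    (ha : ∀ j, a j ∈ M) (hdist : Function.Injective a)
    (χ : ℤ) (hχ : ∑ j, d j = χ)
    -- the renormalized energy
    (W : (Fin n → EuclideanSpace ℝ (Fin ℓ)) → ℝ)
    (hW : ∀ b : Fin n → EuclideanSpace ℝ (Fin ℓ),
      W b = 4 * π ^ 2 * ∑ j, ∑ k ∈ Finset.univ.filter (fun k => j < k),
              (d j : ℝ) * (d k : ℝ) * G (b j) (b k)
          + 2 * π * ∑ j, (π * (d j : ℝ) ^ 2 * H (b j, b j) + (d j : ℝ) * ψ₀ (b j))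
          + c)
    (j : Fin n) (hud : UniqueDiffWithinAt ℝ M (a j)) :
    fderivWithin ℝ (fun x => W (Function.update a j x)) M (a j)
      = (2 * π * (d j : ℝ)) •
          (fderivWithin ℝ
              (fun x => 2 * π * ∑ k ∈ Finset.univ.filter (fun k => k ≠ j),
                  (d k : ℝ) * G x (a k) + ψ₀ x) M (a j)
            + (2 * π * (d j : ℝ)) •
                fderivWithin ℝ (fun x => H (x, a j)) M (a j)) := by
  classical
  have haj : a j ∈ M := ha j
  -- differentiability of the Green-function terms
  have hGd : ∀ k, k ≠ j → DifferentiableWithinAt ℝ (fun x => G x (a k)) M (a j) := by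
    intro k hk
    have hne : a j ≠ a k := fun h => hk (hdist h).symm
    have h1 : DifferentiableWithinAt ℝ (fun x => G x (a k)) (M \ {a k}) (a j) :=
      ((hGreg (a k) (ha k)).differentiableOn one_ne_zero) (a j) ⟨haj, by simpa using hne⟩
    refine h1.mono_of_mem_nhdsWithin ?_
    rw [diff_eq]
    exact inter_mem_nhdsWithin M (isOpen_compl_singleton.mem_nhds (by simpa using hne))
  set S := ∑ k ∈ Finset.univ.filter (fun k => k ≠ j),
      (d k : ℝ) • fderivWithin ℝ (fun x => G x (a k)) M (a j) with hSdef
  set Ψ' := fderivWithin ℝ ψ₀ M (a j) with hΨdef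
  set H1 := fderivWithin ℝ (fun x => H (x, a j)) M (a j) with hH1def
  have hsum : HasFDerivWithinAt
      (fun x => ∑ k ∈ Finset.univ.filter (fun k => k ≠ j), (d k : ℝ) * G x (a k))
      S M (a j) := by
    rw [hSdef]
    exact HasFDerivWithinAt.fun_sum (u := Finset.univ.filter (fun k => k ≠ j)) fun k hk =>
      ((hGd k (by simpa using hk)).hasFDerivWithinAt).const_mul _
  have hψ' : HasFDerivWithinAt ψ₀ Ψ' M (a j) :=
    ((hψ.differentiableOn one_ne_zero) (a j) haj).hasFDerivWithinAt
  -- the H-terms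
  set Φ := fderivWithin ℝ H (M ×ˢ M) (a j, a j) with hΦdef
  have hΦ : HasFDerivWithinAt H Φ (M ×ˢ M) (a j, a j) :=
    ((hHreg.differentiableOn one_ne_zero) _ ⟨haj, haj⟩).hasFDerivWithinAt
  have hH1 : HasFDerivWithinAt (fun x => H (x, a j))
      (Φ.comp ((ContinuousLinearMap.id ℝ _).prod 0)) M (a j) :=
    HasFDerivWithinAt.comp (a j) hΦ
      (HasFDerivWithinAt.prodMk (hasFDerivWithinAt_id _ _) (hasFDerivWithinAt_const _ _ _))
      (fun x hx => ⟨hx, haj⟩)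
  have hH2 : HasFDerivWithinAt (fun x => H (a j, x))
      (Φ.comp ((0 : _ →L[ℝ] _).prod (ContinuousLinearMap.id ℝ _))) M (a j) :=
    HasFDerivWithinAt.comp (a j) hΦ
      (HasFDerivWithinAt.prodMk (hasFDerivWithinAt_const _ _ _) (hasFDerivWithinAt_id _ _))
      (fun x hx => ⟨haj, hx⟩)
  have hH1f : H1 = Φ.comp ((ContinuousLinearMap.id ℝ _).prod 0) := hH1.fderivWithin hud
  have hH2f : fderivWithin ℝ (fun x => H (a j, x)) M (a j)
      = Φ.comp ((0 : _ →L[ℝ] _).prod (ContinuousLinearMap.id ℝ _)) := hH2.fderivWithin hud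
  have hsymf : fderivWithin ℝ (fun x => H (a j, x)) M (a j) = H1 :=
    fderivWithin_congr (fun x hx => hHsym (a j) haj x hx) (hHsym (a j) haj (a j) haj)
  have hdiag : HasFDerivWithinAt (fun x => H (x, x)) (H1 + H1) M (a j) := by
    have h0 : HasFDerivWithinAt (fun x => H (x, x))
        (Φ.comp ((ContinuousLinearMap.id ℝ _).prod (ContinuousLinearMap.id ℝ _))) M (a j) :=
      HasFDerivWithinAt.comp (a j) hΦ
        (HasFDerivWithinAt.prodMk (hasFDerivWithinAt_id _ _) (hasFDerivWithinAt_id _ _))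
        (fun x hx => ⟨hx, hx⟩)
    have heq : Φ.comp ((ContinuousLinearMap.id ℝ _).prod (ContinuousLinearMap.id ℝ _))
        = Φ.comp ((ContinuousLinearMap.id ℝ _).prod 0)
          + Φ.comp ((0 : _ →L[ℝ] _).prod (ContinuousLinearMap.id ℝ _)) := by
      ext v
      simp only [ContinuousLinearMap.comp_apply, ContinuousLinearMap.add_apply,
        ContinuousLinearMap.prod_apply, ContinuousLinearMap.id_apply,
        ContinuousLinearMap.zero_apply]
      rw [← map_add]
      simp
    rw [heq] at h0
    rwa [← hH1f, ← hH2f, hsymf] at h0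
  -- rewrite the right-hand side
  have hS : HasFDerivWithinAt
      (fun x => 2 * π * ∑ k ∈ Finset.univ.filter (fun k => k ≠ j),
        (d k : ℝ) * G x (a k) + ψ₀ x)
      ((2 * π) • S + Ψ') M (a j) := (hsum.const_mul _).add hψ'
  rw [hS.fderivWithin hud]
  -- the constant part of W as a function of the j-th point
  set K := 4 * π ^ 2 * (∑ p, ∑ q ∈ Finset.univ.filter (fun q => p < q),
        (if p = j ∨ q = j then 0 else (d p : ℝ) * (d q : ℝ) * G (a p) (a q)))
      + 2 * π * ∑ p ∈ Finset.univ.erase j,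
          (π * (d p : ℝ) ^ 2 * H (a p, a p) + (d p : ℝ) * ψ₀ (a p)) + c with hK
  -- W ∘ update agrees on M with an explicit function of x
  have hEq : EqOn (fun x => W (Function.update a j x))
      (fun x => (4 * π ^ 2 * (d j : ℝ))
            * (∑ k ∈ Finset.univ.filter (fun k => k ≠ j), (d k : ℝ) * G x (a k))
          + (2 * π ^ 2 * (d j : ℝ) ^ 2) * H (x, x)
          + (2 * π * (d j : ℝ)) * ψ₀ x + K) M := by
    intro x hx
    simp only [hW]
    have h2 : (∑ p, (π * (d p : ℝ) ^ 2 * H (Function.update a j x p, Function.update a j x p)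
            + (d p : ℝ) * ψ₀ (Function.update a j x p)))
        = (π * (d j : ℝ) ^ 2 * H (x, x) + (d j : ℝ) * ψ₀ x)
          + ∑ p ∈ Finset.univ.erase j,
              (π * (d p : ℝ) ^ 2 * H (a p, a p) + (d p : ℝ) * ψ₀ (a p)) := by
      rw [← Finset.add_sum_erase _ _ (Finset.mem_univ j)]
      simp only [Function.update_self]
      congr 1
      refine Finset.sum_congr rfl fun p hp => ?_
      rw [Function.update_of_ne (Finset.ne_of_mem_erase hp)]
    have key : ∀ p : Fin n, ∀ q ∈ Finset.univ.filter (fun q => p < q),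
        (d p : ℝ) * (d q : ℝ) * G (Function.update a j x p) (Function.update a j x q)
        = (if p = j then (d j : ℝ) * ((d q : ℝ) * G x (a q)) else 0)
          + (if q = j then (d p : ℝ) * G x (a p) * (d j : ℝ) else 0)
          + (if p = j ∨ q = j then 0 else (d p : ℝ) * (d q : ℝ) * G (a p) (a q)) := by
      intro p q hq
      have hpq : p < q := by simpa using hq
      rcases eq_or_ne p j with hp | hp
      · have hqj : q ≠ j := by simpa [hp] using hpq.ne'
        rw [hp, Function.update_self, Function.update_of_ne hqj]
        simp [hqj]
        ring
      · rcases eq_or_ne q j with hq' | hq'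
        · rw [hq', Function.update_of_ne hp, Function.update_self,
            hGsym (a p) (ha p) x hx]
          simp [hp]
          ring
        · rw [Function.update_of_ne hp, Function.update_of_ne hq']
          simp [hp, hq']
    have h1 : (∑ p, ∑ q ∈ Finset.univ.filter (fun q => p < q),
          (d p : ℝ) * (d q : ℝ) * G (Function.update a j x p) (Function.update a j x q))
        = (d j : ℝ) * (∑ k ∈ Finset.univ.filter (fun k => k ≠ j), (d k : ℝ) * G x (a k))
          + ∑ p, ∑ q ∈ Finset.univ.filter (fun q => p < q),
              (if p = j ∨ q = j then 0 else (d p : ℝ) * (d q : ℝ) * G (a p) (a q)) := by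
      rw [Finset.sum_congr rfl fun p _ => Finset.sum_congr rfl (key p)]
      simp only [Finset.sum_add_distrib]
      congr 1
      have hT1 : (∑ p, ∑ q ∈ Finset.univ.filter (fun q => p < q),
            (if p = j then (d j : ℝ) * ((d q : ℝ) * G x (a q)) else 0))
          = (d j : ℝ) * ∑ q ∈ Finset.univ.filter (fun q => j < q), (d q : ℝ) * G x (a q) := by
        rw [Finset.sum_congr rfl fun p (_ : p ∈ Finset.univ) => (by
          split_ifs with h <;> simp [h, Finset.mul_sum] :
            (∑ q ∈ Finset.univ.filter (fun q => p < q),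
              (if p = j then (d j : ℝ) * ((d q : ℝ) * G x (a q)) else 0))
            = (if p = j then (d j : ℝ) * ∑ q ∈ Finset.univ.filter (fun q => p < q),
                (d q : ℝ) * G x (a q) else 0))]
        rw [Finset.sum_ite_eq' Finset.univ j]
        simp
      have hT2 : (∑ p, ∑ q ∈ Finset.univ.filter (fun q => p < q),
            (if q = j then (d p : ℝ) * G x (a p) * (d j : ℝ) else 0))
          = (d j : ℝ) * ∑ p ∈ Finset.univ.filter (fun p => p < j), (d p : ℝ) * G x (a p) := by
        rw [Finset.sum_congr rfl fun p (_ : p ∈ Finset.univ) =>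
          Finset.sum_ite_eq' (Finset.univ.filter (fun q => p < q)) j
            (fun _ => (d p : ℝ) * G x (a p) * (d j : ℝ))]
        simp only [Finset.mem_filter, Finset.mem_univ, true_and]
        rw [Finset.mul_sum, ← Finset.sum_filter]
        exact Finset.sum_congr rfl fun p _ => by ring
      rw [hT1, hT2, aux_split j (fun k => (d k : ℝ) * G x (a k)), mul_add]
    rw [h1, h2, hK]
    ring
  rw [fderivWithin_congr hEq (hEq haj)]
  have hF₂ : HasFDerivWithinAt
      (fun x => (4 * π ^ 2 * (d j : ℝ))
            * (∑ k ∈ Finset.univ.filter (fun k => k ≠ j), (d k : ℝ) * G x (a k))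
          + (2 * π ^ 2 * (d j : ℝ) ^ 2) * H (x, x)
          + (2 * π * (d j : ℝ)) * ψ₀ x + K)
      ((4 * π ^ 2 * (d j : ℝ)) • S + (2 * π ^ 2 * (d j : ℝ) ^ 2) • (H1 + H1)
        + (2 * π * (d j : ℝ)) • Ψ') M (a j) :=
    (((hsum.const_mul _).add (hdiag.const_mul _)).add (hψ'.const_mul _)).add_const K
  rw [hF₂.fderivWithin hud]
  module
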